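/- Any CVRP solution with m nonempty routes over customers partitioned into N clusters uses at least m + N edges that are penalized (i.e., edges joining different clusters or incident to the depot), with equality if and only if each cluster is visited consecutively by a single vehicle. -/

import Mathlib

/-- Number of adjacent positions in a list whose two entries differ. -/
def countChanges {α : Type*} [DecidableEq α] : List α → ℕ
  | a :: b :: t => (if a = b then 0 else 1) + countChanges (b :: t)
  | _ => 0

/-- Number of penalized edges of a solution: consecutive pairs of visits (on the
closed walks based at the depot `none`) whose endpoints belong to different
clusters or one of whose endpoints is the depot. -/
def penEdgeCount {C : Type*} {N m : ℕ} (clu : C → Fin N) (routes : Fin m → List C) : ℕ :=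
  ∑ i, countChanges (((none : Option (Fin N)) :: (routes i).map (fun v => some (clu v))) ++ [none])

/-- Cluster contiguity: each cluster is visited consecutively by a single vehicle. -/
def ClusterContiguous {C : Type*} {N m : ℕ} (clu : C → Fin N) (routes : Fin m → List C) : Prop :=
  ∀ k : Fin N, ∃ (i : Fin m) (l₁ l₂ l₃ : List C),
    routes i = l₁ ++ l₂ ++ l₃ ∧ ∀ v, v ∈ l₂ ↔ clu v = k

section Runs

variable {α : Type*} (p : α → Prop) [DecidablePred p]

/-- Number of maximal runs of elements satisfying `p`. -/
def runs : List α → ℕ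
  | [] => 0
  | [a] => if p a then 1 else 0
  | a :: b :: t => (if p a ∧ ¬ p b then 1 else 0) + runs (b :: t)

theorem runs_eq_zero_iff : ∀ l : List α, (runs p l = 0 ↔ ∀ v ∈ l, ¬ p v)
  | [] => by simp [runs]
  | [a] => by by_cases h : p a <;> simp [runs, h]
  | a :: b :: t => by
    have ih := runs_eq_zero_iff (b :: t)
    by_cases ha : p a <;> by_cases hb : p b <;>
      simp_all [runs]

theorem runs_cons_notp (a : α) (ha : ¬ p a) (l : List α) :
    runs p (a :: l) = runs p l := by
  cases l with
  | nil => simp [runs, ha]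
  | cons c t => simp [runs, ha]

theorem runs_prefix_notp : ∀ l₁ : List α, (∀ v ∈ l₁, ¬ p v) → ∀ l : List α,
    runs p (l₁ ++ l) = runs p l
  | [], _, l => rfl
  | a :: t, h, l => by
    rw [List.cons_append, runs_cons_notp p a (h a (by simp)),
      runs_prefix_notp t (fun v hv => h v (by simp [hv])) l]

theorem runs_allp_append : ∀ l₂ : List α, l₂ ≠ [] → (∀ v ∈ l₂, p v) →
    ∀ l₃ : List α, (∀ v ∈ l₃, ¬ p v) → runs p (l₂ ++ l₃) = 1
  | [], h, _, _, _ => absurd rfl h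
  | [a], _, h2, l₃, h3 => by
    cases l₃ with
    | nil => simp [runs, h2 a (by simp)]
    | cons c t =>
      have h0 : runs p (c :: t) = 0 := (runs_eq_zero_iff p _).2 h3
      simp [runs, h2 a (by simp), h3 c (by simp), h0]
  | a :: b :: t, _, h2, l₃, h3 => by
    have ih := runs_allp_append (b :: t) (by simp)
      (fun v hv => h2 v (List.mem_cons_of_mem a hv)) l₃ h3
    have hb : p b := h2 b (by simp)
    simp only [List.cons_append] at ih ⊢
    simp [runs, hb, ih]

theorem runs_shape (l₁ l₂ l₃ : List α) (h1 : ∀ v ∈ l₁, ¬ p v) (hne : l₂ ≠ [])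
    (h2 : ∀ v ∈ l₂, p v) (h3 : ∀ v ∈ l₃, ¬ p v) :
    runs p (l₁ ++ l₂ ++ l₃) = 1 := by
  rw [List.append_assoc, runs_prefix_notp p l₁ h1, runs_allp_append p l₂ hne h2 l₃ h3]

theorem runs_eq_one : ∀ l : List α, runs p l = 1 →
    ∃ l₁ l₂ l₃, l = l₁ ++ l₂ ++ l₃ ∧ (∀ v ∈ l₁, ¬ p v) ∧ l₂ ≠ [] ∧
      (∀ v ∈ l₂, p v) ∧ (∀ v ∈ l₃, ¬ p v)
  | [] => by simp [runs]
  | [a] => by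
    intro h
    have ha : p a := by by_contra hc; simp [runs, hc] at h
    exact ⟨[], [a], [], by simp, by simp, by simp, by simp [ha], by simp⟩
  | a :: b :: t => by
    intro h
    by_cases hab : p a ∧ ¬ p b
    · have h0 : runs p (b :: t) = 0 := by simp [runs, hab] at h; omega
      exact ⟨[], [a], b :: t, by simp, by simp, by simp, by simp [hab.1],
        (runs_eq_zero_iff p _).1 h0⟩
    · have h1 : runs p (b :: t) = 1 := by simp [runs, hab] at h; omega
      obtain ⟨l₁, l₂, l₃, heq, hn1, hne, hp2, hn3⟩ := runs_eq_one (b :: t) h1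
      by_cases hpa : p a
      · have hpb : p b := by tauto
        have hl1 : l₁ = [] := by
          cases l₁ with
          | nil => rfl
          | cons x xs =>
            exfalso
            have hx : x = b := by
              have := heq
              simp only [List.cons_append, List.append_assoc] at this
              exact (List.cons.injEq _ _ _ _ ▸ this).1.symm ▸ rfl
            exact hn1 x (by simp) (hx ▸ hpb)
        subst hl1
        simp only [List.nil_append] at heq
        exact ⟨[], a :: l₂, l₃, by simp [heq], by simp, by simp,
          by intro v hv; rcases List.mem_cons.1 hv with h | h
             · exact h ▸ hpa
             · exact hp2 v h, hn3⟩
      · exact ⟨a :: l₁, l₂, l₃, by simp [heq], by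
          intro v hv; rcases List.mem_cons.1 hv with h | h
          · exact h ▸ hpa
          · exact hn1 v h, hne, hp2, hn3⟩

theorem runs_pos_of_mem {l : List α} {v : α} (hv : v ∈ l) (hp : p v) :
    1 ≤ runs p l := by
  rcases Nat.eq_zero_or_pos (runs p l) with h | h
  · exact absurd hp ((runs_eq_zero_iff p l).1 h v hv)
  · exact h

end Runs

section Counting

variable {C : Type*} {N : ℕ}

theorem sum_runs_eq (clu : C → Fin N) : ∀ l : List C, l ≠ [] →
    ∑ k : Fin N, runs (fun v => clu v = k) l = countChanges (l.map clu) + 1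
  | [], h => absurd rfl h
  | [a], _ => by
    simp [runs, countChanges, Finset.sum_ite_eq]
  | a :: b :: t, _ => by
    have ih := sum_runs_eq clu (b :: t) (by simp)
    have hsum : ∑ k : Fin N, (if clu a = k ∧ ¬ clu b = k then 1 else 0) =
        (if clu a = clu b then 0 else 1) := by
      have h1 : ∀ k : Fin N, (if clu a = k ∧ ¬ clu b = k then 1 else 0) =
          if k = clu a then (if clu a = clu b then 0 else 1) else 0 := by
        intro k
        by_cases hk : k = clu a <;> by_cases hab : clu a = clu b <;>
          simp_all <;> omega
      rw [Finset.sum_congr rfl (fun k _ => h1 k), Finset.sum_ite_eq'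
        Finset.univ (clu a) (fun _ => if clu a = clu b then 0 else 1)]
      simp
    calc ∑ k : Fin N, runs (fun v => clu v = k) (a :: b :: t)
        = ∑ k : Fin N, ((if clu a = k ∧ ¬ clu b = k then 1 else 0) +
            runs (fun v => clu v = k) (b :: t)) := rfl
      _ = (if clu a = clu b then 0 else 1) +
            (countChanges ((b :: t).map clu) + 1) := by
          rw [Finset.sum_add_distrib, hsum, ih]
      _ = countChanges ((a :: b :: t).map clu) + 1 := by
          simp [countChanges]; ring

theorem cc_depot : ∀ l : List (Fin N), l ≠ [] →
    countChanges (((none : Option (Fin N)) :: l.map some) ++ [none]) =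
      countChanges l + 2
  | [], h => absurd rfl h
  | [a], _ => by simp [countChanges]
  | a :: b :: t, _ => by
    have ih := cc_depot (b :: t) (by simp)
    simp only [List.map_cons, List.cons_append, countChanges] at ih ⊢
    by_cases hab : a = b <;> simp [hab] at ih ⊢ <;> omega

end Counting

/-- Any CVRP solution with `m` nonempty routes over customers partitioned into `N`
clusters uses at least `m + N` penalized edges, with equality iff each cluster is
visited consecutively by a single vehicle. -/
theorem penEdgeCount_lower_bound {C : Type*} {N m : ℕ} (clu : C → Fin N)
    (hsurj : Function.Surjective clu)
    (routes : Fin m → List C)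
    (hvisit : ∀ v : C, ∃! i : Fin m, v ∈ routes i)
    (hnodup : ∀ i, (routes i).Nodup)
    (hne : ∀ i, routes i ≠ []) :
    m + N ≤ penEdgeCount clu routes ∧
    (penEdgeCount clu routes = m + N ↔ ClusterContiguous clu routes) := by
  classical
  set T : Fin N → ℕ := fun k => ∑ i, runs (fun v => clu v = k) (routes i) with hT
  -- per-route computation
  have hroute : ∀ i, countChanges (((none : Option (Fin N)) ::
      (routes i).map (fun v => some (clu v))) ++ [none]) =
      (∑ k : Fin N, runs (fun v => clu v = k) (routes i)) + 1 := by
    intro i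
    have h1 : (routes i).map (fun v => some (clu v)) = ((routes i).map clu).map some := by
      simp [List.map_map]
    have h2 : ((routes i).map clu) ≠ [] := by
      simp [hne i]
    rw [h1, cc_depot _ h2, sum_runs_eq clu (routes i) (hne i)]
  have hpen : penEdgeCount clu routes = m + ∑ k : Fin N, T k := by
    unfold penEdgeCount
    rw [Finset.sum_congr rfl (fun i _ => hroute i), Finset.sum_add_distrib,
      Finset.sum_comm]
    have h1 : ∑ _i : Fin m, (1 : ℕ) = m := by simp
    rw [h1, Nat.add_comm]
  -- each cluster has at least one run
  have hT1 : ∀ k, 1 ≤ T k := by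
    intro k
    obtain ⟨v, hv⟩ := hsurj k
    obtain ⟨i, hi, _⟩ := hvisit v
    have h1 : 1 ≤ runs (fun v => clu v = k) (routes i) := runs_pos_of_mem _ hi hv
    have h2 : runs (fun v => clu v = k) (routes i) ≤
        ∑ j, runs (fun v => clu v = k) (routes j) :=
      Finset.single_le_sum (f := fun j => runs (fun v => clu v = k) (routes j))
        (fun j _ => Nat.zero_le _) (Finset.mem_univ i)
    exact le_trans h1 h2
  have hsumN : N ≤ ∑ k : Fin N, T k := by
    calc N = ∑ _k : Fin N, 1 := by simp
      _ ≤ ∑ k : Fin N, T k := Finset.sum_le_sum (fun k _ => hT1 k)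
  refine ⟨by omega, ?_⟩
  -- equality ↔ all T k = 1
  have hiff1 : penEdgeCount clu routes = m + N ↔ ∀ k, T k = 1 := by
    rw [hpen]
    constructor
    · intro h k
      have hsum : ∑ k : Fin N, T k = ∑ _k : Fin N, 1 := by simp; omega
      have := (Finset.sum_eq_sum_iff_of_le (fun k _ => hT1 k)).1 hsum.symm
      exact (this k (Finset.mem_univ k)).symm
    · intro h
      simp [h]
  rw [hiff1]
  constructor
  · -- T k = 1 for all k → contiguous
    intro h k
    have hk := h k
    -- find the route carrying cluster k
    have hex : ∃ i, runs (fun v => clu v = k) (routes i) ≠ 0 := by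
      by_contra hc
      push_neg at hc
      have : T k = 0 := Finset.sum_eq_zero (fun i _ => hc i)
      omega
    obtain ⟨i, hi0⟩ := hex
    have hile : runs (fun v => clu v = k) (routes i) ≤
        ∑ j, runs (fun v => clu v = k) (routes j) :=
      Finset.single_le_sum (f := fun j => runs (fun v => clu v = k) (routes j))
        (fun j _ => Nat.zero_le _) (Finset.mem_univ i)
    have hk' : ∑ j, runs (fun v => clu v = k) (routes j) = 1 := hk
    have hi1 : runs (fun v => clu v = k) (routes i) = 1 := by omega
    have hrest : ∀ j, j ≠ i → runs (fun v => clu v = k) (routes j) = 0 := by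
      intro j hj
      have herase : ∑ j' ∈ Finset.univ.erase i, runs (fun v => clu v = k) (routes j') = 0 := by
        have := Finset.add_sum_erase Finset.univ
          (fun j' => runs (fun v => clu v = k) (routes j')) (Finset.mem_univ i)
        omega
      exact Finset.sum_eq_zero_iff.1 herase j (Finset.mem_erase.2 ⟨hj, Finset.mem_univ j⟩)
    obtain ⟨l₁, l₂, l₃, heq, hn1, hne2, hp2, hn3⟩ := runs_eq_one _ _ hi1
    refine ⟨i, l₁, l₂, l₃, heq, ?_⟩
    intro v
    constructor
    · exact fun hv => hp2 v hv
    · intro hv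
      obtain ⟨j, hj, hju⟩ := hvisit v
      have hji : j = i := by
        by_contra hc
        exact (runs_eq_zero_iff (fun v => clu v = k) (routes j)).1
          (hrest j hc) v hj hv
      rw [hji, heq] at hj
      rcases List.mem_append.1 hj with hv' | hv'
      · rcases List.mem_append.1 hv' with hv'' | hv''
        · exact absurd hv (hn1 v hv'')
        · exact hv''
      · exact absurd hv (hn3 v hv')
  · -- contiguous → T k = 1 for all k
    intro h k
    obtain ⟨i, l₁, l₂, l₃, heq, hmem⟩ := h k
    -- disjointness from nodup
    have hnd : (l₁ ++ (l₂ ++ l₃)).Nodup := by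
      have := hnodup i
      rwa [heq, List.append_assoc] at this
    have hd1 : l₁.Disjoint (l₂ ++ l₃) := by
      intro a ha hb; exact (List.nodup_append.1 hnd).2.2 a ha a hb rfl
    have hd2 : l₂.Disjoint l₃ := by
      intro a ha hb; exact (List.nodup_append.1 (List.nodup_append.1 hnd).2.1).2.2 a ha a hb rfl
    have hn1 : ∀ v ∈ l₁, ¬ clu v = k := by
      intro v hv hc
      exact hd1 hv (List.mem_append_left _ ((hmem v).2 hc))
    have hn3 : ∀ v ∈ l₃, ¬ clu v = k := by
      intro v hv hc
      exact hd2 ((hmem v).2 hc) hv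
    have hne2 : l₂ ≠ [] := by
      obtain ⟨v, hv⟩ := hsurj k
      have hv2 : v ∈ l₂ := (hmem v).2 hv
      exact fun hc => by simp [hc] at hv2
    have hi1 : runs (fun v => clu v = k) (routes i) = 1 := by
      rw [heq]
      exact runs_shape _ l₁ l₂ l₃ hn1 hne2 (fun v hv => (hmem v).1 hv) hn3
    have hrest : ∀ j, j ≠ i → runs (fun v => clu v = k) (routes j) = 0 := by
      intro j hj
      apply (runs_eq_zero_iff _ _).2
      intro v hv hc
      have hvl2 : v ∈ l₂ := (hmem v).2 hc
      have hvi : v ∈ routes i := by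
        rw [heq]; exact List.mem_append_left _ (List.mem_append_right _ hvl2)
      obtain ⟨j', _, hju⟩ := hvisit v
      exact hj ((hju j hv).trans (hju i hvi).symm)
    show ∑ j, runs (fun v => clu v = k) (routes j) = 1
    rw [Finset.sum_eq_single i (fun j _ hj => hrest j hj)
      (fun hni => absurd (Finset.mem_univ i) hni)]
    exact hi1
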